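/- arXiv:1805.01626 — 2 statements merged into one kernel-verified Lean document; each statement's English description precedes it below -/
import Mathlib

section
/- For every integer k ≥ 2 there exists a polynomial p of degree at most k with p(0)=0 and p'(0)=0 (no linear or constant terms) such that |p(x) − x| ≤ 2/(k(k+1)) for all x ∈ [0,1]. -/
open Polynomial Polynomial.Chebyshev

private lemma natDegree_T_le : ∀ n : ℕ, (T ℝ n).natDegree ≤ n := by
  intro n
  induction n using Nat.twoStepInduction with
  | zero => simp [T_zero]
  | one => simp [T_one]
  | more n ih1 ih2 =>
    have h : ((n + 2 : ℕ) : ℤ) = (n : ℤ) + 2 := by push_cast; ring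
    rw [h, T_add_two]
    refine le_trans (natDegree_sub_le _ _) (max_le ?_ (le_trans ih1 (by omega)))
    refine le_trans natDegree_mul_le ?_
    have h2 : (2 * X : ℝ[X]).natDegree ≤ 1 := le_trans natDegree_mul_le (by simp)
    have h3 : ((n : ℤ) + 1) = ((n + 1 : ℕ) : ℤ) := by push_cast; ring
    rw [h3]
    have := ih2
    omega

private lemma U_eval_neg_one : ∀ n : ℕ, (U ℝ n).eval (-1) = (-1 : ℝ) ^ n * (n + 1) := by
  intro n
  induction n using Nat.twoStepInduction with
  | zero => simp [U_zero]
  | one => simp [U_one]; ring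
  | more n ih1 ih2 =>
    have h : ((n + 2 : ℕ) : ℤ) = (n : ℤ) + 2 := by push_cast; ring
    rw [h, U_add_two]
    have h3 : ((n : ℤ) + 1) = ((n + 1 : ℕ) : ℤ) := by push_cast; ring
    rw [h3]
    simp only [eval_sub, eval_mul, eval_ofNat, eval_X, ih1, ih2]
    push_cast
    ring

private lemma abs_T_eval_le (n : ℤ) (y : ℝ) (hy : y ∈ Set.Icc (-1 : ℝ) 1) :
    |(T ℝ n).eval y| ≤ 1 := by
  obtain ⟨h1, h2⟩ := hy
  have : y = Real.cos (Real.arccos y) := (Real.cos_arccos h1 h2).symm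
  rw [this, T_real_cos]
  exact Real.abs_cos_le_one _

/-- For every integer `k ≥ 2` there exists a polynomial of degree at most `k`
with no constant or linear term approximating `x` on `[0,1]` within `2/(k(k+1))`. -/
theorem exists_poly_approx_id_unit_interval (k : ℕ) (hk : 2 ≤ k) :
    ∃ p : Polynomial ℝ, p.natDegree ≤ k ∧ p.coeff 0 = 0 ∧ p.coeff 1 = 0 ∧
      ∀ x ∈ Set.Icc (0 : ℝ) 1, |p.eval x - x| ≤ 2 / ((k : ℝ) * (k + 1)) := by
  set q : ℝ[X] := C 2 * X + C (-1) with hq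
  set r : ℝ[X] := (T ℝ (k : ℤ)).comp q with hr
  have hq0 : q.eval 0 = -1 := by simp [hq]
  -- derivative value
  have hd : r.coeff 1 = 2 * ((k : ℝ)) * ((-1 : ℝ) ^ (k - 1) * ((k - 1 : ℕ) + 1)) := by
    have h1 : r.coeff 1 = (derivative r).eval 0 := by
      rw [← coeff_zero_eq_eval_zero, coeff_derivative]
      push_cast; ring
    rw [h1, hr, derivative_comp, T_derivative_eq_U]
    have hk1 : ((k : ℤ) - 1) = ((k - 1 : ℕ) : ℤ) := by omega
    simp only [hq, derivative_add, derivative_mul, derivative_C, derivative_X, hk1]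
    simp only [eval_add, eval_mul, eval_comp, eval_C, eval_X, eval_intCast, eval_zero]
    norm_num [U_eval_neg_one (k - 1)]
    push_cast
    ring
  have hknz : (0:ℝ) < (k:ℝ) := by positivity
  have habs : |r.coeff 1| = 2 * (k : ℝ) ^ 2 := by
    rw [hd]
    have : ((k - 1 : ℕ) : ℝ) + 1 = (k : ℝ) := by
      have : (1:ℕ) ≤ k := by omega
      push_cast [this]; ring
    rw [this, abs_mul, abs_mul, abs_mul, abs_pow, abs_neg, abs_one, one_pow, one_mul]
    rw [abs_of_nonneg (by norm_num : (0:ℝ) ≤ 2), abs_of_nonneg hknz.le]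
    ring
  have hdnz : r.coeff 1 ≠ 0 := by
    intro h; rw [h, abs_zero] at habs; nlinarith [mul_pos hknz hknz]
  set d : ℝ := r.coeff 1 with hdd
  refine ⟨X - C d⁻¹ * (r - C (r.eval 0)), ?_, ?_, ?_, ?_⟩
  · -- degree
    refine le_trans (natDegree_sub_le _ _) (max_le ?_ ?_)
    · rw [natDegree_X]; omega
    · refine le_trans natDegree_mul_le ?_
      simp only [natDegree_C, zero_add]
      refine le_trans (natDegree_sub_le _ _) (max_le ?_ (by simp))
      refine le_trans natDegree_comp_le ?_
      have hqd : q.natDegree ≤ 1 := by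
        rw [hq]; exact le_trans (natDegree_add_le _ _)
          (max_le (le_trans natDegree_mul_le (by simp)) (by simp))
      calc (T ℝ (k:ℤ)).natDegree * q.natDegree ≤ k * 1 :=
            Nat.mul_le_mul (by simpa using natDegree_T_le k) hqd
        _ = k := by omega
  · simp [coeff_sub, coeff_zero_eq_eval_zero]
  · have h1 : (r - C (r.eval 0)).coeff 1 = d := by simp [hdd]
    simp [coeff_sub, h1, hdnz]
  · intro x hx
    obtain ⟨hx0, hx1⟩ := hx
    have hqe : q.eval x = 2 * x - 1 := by simp [hq]; ring
    have hmem : (2 * x - 1) ∈ Set.Icc (-1 : ℝ) 1 := ⟨by linarith, by linarith⟩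
    have h1 : |r.eval x| ≤ 1 := by
      rw [hr, eval_comp, hqe]; exact abs_T_eval_le _ _ hmem
    have h0 : |r.eval 0| ≤ 1 := by
      rw [hr, eval_comp, hq0]; exact abs_T_eval_le _ _ ⟨le_refl _, by norm_num⟩
    have hev : (X - C d⁻¹ * (r - C (r.eval 0)) : ℝ[X]).eval x - x
        = -(d⁻¹ * (r.eval x - r.eval 0)) := by
      simp only [eval_sub, eval_mul, eval_X, eval_C]; ring
    rw [hev, abs_neg, abs_mul, abs_inv, habs]
    have hb : |r.eval x - r.eval 0| ≤ 2 := by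
      calc |r.eval x - r.eval 0| ≤ |r.eval x| + |r.eval 0| := abs_sub _ _
        _ ≤ 2 := by linarith
    have hk2 : (0:ℝ) < 2 * (k:ℝ)^2 := by positivity
    calc (2 * (k:ℝ)^2)⁻¹ * |r.eval x - r.eval 0| ≤ (2 * (k:ℝ)^2)⁻¹ * 2 := by
          exact mul_le_mul_of_nonneg_left hb (by positivity)
      _ = 2 / (2 * (k:ℝ)^2) := by ring
      _ ≤ 2 / ((k : ℝ) * (k + 1)) := by
          have hpos : (0:ℝ) < (k:ℝ) * ((k:ℝ)+1) := by positivity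
          have hkge : (2:ℝ) ≤ (k:ℝ) := by exact_mod_cast hk
          apply div_le_div_of_nonneg_left (by norm_num) hpos
          nlinarith
end

section
/- Let μ₁, μ₂ ∈ R and σ₁, σ₂ > 0 with σ₁² + σ₂² − σ₁²σ₂² > 0. Then the pairwise correlation of N(μ₁,σ₁²) and N(μ₂,σ₂²) relative to N(0,1), defined as ∫ p₁(x)p₂(x)/φ(x) dx − 1 where φ is the standard normal density, equals exp(−(μ₁²(σ₂²−1) + 2μ₁μ₂ + μ₂²(σ₁²−1))/(2σ₁²(σ₂²−1) − 2σ₂²)) / √(σ₁² + σ₂² − σ₁²σ₂²) − 1. -/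
open MeasureTheory

/-- The pairwise correlation of `N(μ₁,σ₁²)` and `N(μ₂,σ₂²)` relative to `N(0,1)`:
`∫ p₁(x)p₂(x)/φ(x) dx − 1` has the stated closed form. -/
theorem gaussian_pairwise_correlation (μ₁ μ₂ σ₁ σ₂ : ℝ) (hσ₁ : 0 < σ₁) (hσ₂ : 0 < σ₂)
    (hpos : 0 < σ₁ ^ 2 + σ₂ ^ 2 - σ₁ ^ 2 * σ₂ ^ 2) :
    (∫ x : ℝ,
        (Real.exp (-(x - μ₁) ^ 2 / (2 * σ₁ ^ 2)) / Real.sqrt (2 * Real.pi * σ₁ ^ 2)) *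
          (Real.exp (-(x - μ₂) ^ 2 / (2 * σ₂ ^ 2)) / Real.sqrt (2 * Real.pi * σ₂ ^ 2)) /
          (Real.exp (-x ^ 2 / 2) / Real.sqrt (2 * Real.pi))) - 1 =
      Real.exp (-(μ₁ ^ 2 * (σ₂ ^ 2 - 1) + 2 * μ₁ * μ₂ + μ₂ ^ 2 * (σ₁ ^ 2 - 1)) /
          (2 * σ₁ ^ 2 * (σ₂ ^ 2 - 1) - 2 * σ₂ ^ 2)) /
        Real.sqrt (σ₁ ^ 2 + σ₂ ^ 2 - σ₁ ^ 2 * σ₂ ^ 2) - 1 := by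
  have pi_pos := Real.pi_pos
  set S : ℝ := σ₁ ^ 2 + σ₂ ^ 2 - σ₁ ^ 2 * σ₂ ^ 2 with hSdef
  set A : ℝ := S / (2 * σ₁ ^ 2 * σ₂ ^ 2) with hAdef
  set m : ℝ := (μ₁ * σ₂ ^ 2 + μ₂ * σ₁ ^ 2) / S with hmdef
  set E : ℝ := -(μ₁ ^ 2 * (σ₂ ^ 2 - 1) + 2 * μ₁ * μ₂ + μ₂ ^ 2 * (σ₁ ^ 2 - 1)) /
      (2 * σ₁ ^ 2 * (σ₂ ^ 2 - 1) - 2 * σ₂ ^ 2) with hEdef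
  have hσ₁' : (σ₁:ℝ) ≠ 0 := hσ₁.ne'
  have hσ₂' : (σ₂:ℝ) ≠ 0 := hσ₂.ne'
  have hS : S ≠ 0 := hpos.ne'
  have hA : 0 < A := by positivity
  have hden : 2 * σ₁ ^ 2 * (σ₂ ^ 2 - 1) - 2 * σ₂ ^ 2 ≠ 0 := by
    intro h
    apply hS
    rw [hSdef]; nlinarith [h]
  have h2π : (0:ℝ) < 2 * Real.pi := by positivity
  have hs1 : Real.sqrt (2 * Real.pi * σ₁ ^ 2) = Real.sqrt (2 * Real.pi) * σ₁ := by
    rw [show 2 * Real.pi * σ₁ ^ 2 = (Real.sqrt (2 * Real.pi) * σ₁) ^ 2 by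
      rw [mul_pow, Real.sq_sqrt h2π.le], Real.sqrt_sq (by positivity)]
  have hs2 : Real.sqrt (2 * Real.pi * σ₂ ^ 2) = Real.sqrt (2 * Real.pi) * σ₂ := by
    rw [show 2 * Real.pi * σ₂ ^ 2 = (Real.sqrt (2 * Real.pi) * σ₂) ^ 2 by
      rw [mul_pow, Real.sq_sqrt h2π.le], Real.sqrt_sq (by positivity)]
  have hsqrt2π : Real.sqrt (2 * Real.pi) ≠ 0 := by positivity
  have hsqrtS : Real.sqrt S ≠ 0 := Real.sqrt_ne_zero'.mpr hpos
  have step : ∀ e1 e2 e0 : ℝ, e0 ≠ 0 →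
      e1 / (Real.sqrt (2 * Real.pi) * σ₁) * (e2 / (Real.sqrt (2 * Real.pi) * σ₂)) /
        (e0 / Real.sqrt (2 * Real.pi)) = e1 * e2 / e0 / (Real.sqrt (2 * Real.pi) * σ₁ * σ₂) := by
    intro e1 e2 e0 h0
    field_simp
  have key : ∀ x : ℝ,
      (Real.exp (-(x - μ₁) ^ 2 / (2 * σ₁ ^ 2)) / Real.sqrt (2 * Real.pi * σ₁ ^ 2)) *
        (Real.exp (-(x - μ₂) ^ 2 / (2 * σ₂ ^ 2)) / Real.sqrt (2 * Real.pi * σ₂ ^ 2)) /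
        (Real.exp (-x ^ 2 / 2) / Real.sqrt (2 * Real.pi)) =
      Real.exp E / (Real.sqrt (2 * Real.pi) * σ₁ * σ₂) * Real.exp (-A * (x - m) ^ 2) := by
    intro x
    rw [hs1, hs2]
    have hexp : Real.exp (-(x - μ₁) ^ 2 / (2 * σ₁ ^ 2)) *
        Real.exp (-(x - μ₂) ^ 2 / (2 * σ₂ ^ 2)) / Real.exp (-x ^ 2 / 2) =
        Real.exp E * Real.exp (-A * (x - m) ^ 2) := by
      rw [← Real.exp_add, ← Real.exp_add, ← Real.exp_sub]
      congr 1
      rw [hEdef, hAdef, hmdef, hSdef]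
      have hS' : σ₁ ^ 2 + σ₂ ^ 2 - σ₁ ^ 2 * σ₂ ^ 2 ≠ 0 := hS
      rw [show 2 * σ₁ ^ 2 * (σ₂ ^ 2 - 1) - 2 * σ₂ ^ 2 =
        -(2 * (σ₁ ^ 2 + σ₂ ^ 2 - σ₁ ^ 2 * σ₂ ^ 2)) by ring]
      field_simp
      ring
    rw [step _ _ _ (Real.exp_pos _).ne', hexp]
    ring
  simp_rw [key]
  rw [integral_const_mul]
  have hshift : (∫ x : ℝ, Real.exp (-A * (x - m) ^ 2)) = ∫ x : ℝ, Real.exp (-A * x ^ 2) :=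
    integral_sub_right_eq_self (fun x => Real.exp (-A * x ^ 2)) m
  rw [hshift, integral_gaussian]
  have hπA : Real.pi / A = (Real.sqrt (2 * Real.pi) * σ₁ * σ₂ / Real.sqrt S) ^ 2 := by
    rw [div_pow, mul_pow, mul_pow, Real.sq_sqrt h2π.le, Real.sq_sqrt hpos.le, hAdef]
    field_simp
  rw [hπA, Real.sqrt_sq (by positivity)]
  field_simp
end
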